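/- Let K and L be nonempty compact convex sets in ℝⁿ. Then the following are equivalent: (i) for every polytope Q ⊆ K having at most n+1 vertices (i.e., Q is the convex hull of at most n+1 points of K), there exists v ∈ ℝⁿ such that Q + v ⊆ L; (ii) there exists v₀ ∈ ℝⁿ such that K + v₀ ⊆ L. -/

import Mathlib

open Set

/-- The orthogonal projection of `ℝⁿ` onto a subspace `ξ`, viewed as a map `ℝⁿ → ℝⁿ`. -/
noncomputable def projSub {n : ℕ} (ξ : Submodule ℝ (EuclideanSpace ℝ (Fin n)))
    (x : EuclideanSpace ℝ (Fin n)) : EuclideanSpace ℝ (Fin n) :=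
  (Submodule.orthogonalProjection ξ x : EuclideanSpace ℝ (Fin n))

/-- The orthogonal projection of `ℝⁿ` onto the hyperplane `u^⊥`. -/
noncomputable def projHyp {n : ℕ} (u : EuclideanSpace ℝ (Fin n)) :
    EuclideanSpace ℝ (Fin n) → EuclideanSpace ℝ (Fin n) :=
  projSub ((Submodule.span ℝ {u})ᗮ)

/-- `IsSimplex n Δ` : `Δ` is an `n`-simplex in `ℝⁿ`, i.e. the convex hull of
`n+1` affinely independent points. -/
def IsSimplex (n : ℕ) (Δ : Set (EuclideanSpace ℝ (Fin n))) : Prop :=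
  ∃ p : Fin (n + 1) → EuclideanSpace ℝ (Fin n),
    AffineIndependent ℝ p ∧ Δ = convexHull ℝ (Set.range p)

/-- **Inscribed Polytope Containment Theorem.** -/
theorem stmt_1 {n : ℕ} (hn : 1 ≤ n) (K L : Set (EuclideanSpace ℝ (Fin n)))
    (hKne : K.Nonempty) (hKcp : IsCompact K) (hKcv : Convex ℝ K)
    (hLne : L.Nonempty) (hLcp : IsCompact L) (hLcv : Convex ℝ L) :
    (∀ Q : Set (EuclideanSpace ℝ (Fin n)),
      (∃ s : Finset (EuclideanSpace ℝ (Fin n)), s.card ≤ n + 1 ∧ ↑s ⊆ K ∧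
        Q = convexHull ℝ (↑s : Set (EuclideanSpace ℝ (Fin n)))) →
      ∃ v : EuclideanSpace ℝ (Fin n), (fun x => x + v) '' Q ⊆ L) ↔
    (∃ v₀ : EuclideanSpace ℝ (Fin n), (fun x => x + v₀) '' K ⊆ L) := by
  classical
  constructor
  · intro h
    have key : (⋂ x : K, {v : EuclideanSpace ℝ (Fin n) | (x : EuclideanSpace ℝ (Fin n)) + v ∈ L}).Nonempty := by
      apply Convex.helly_theorem_compact' (𝕜 := ℝ)
      · intro x v hv w hw a b ha hb hab
        have hx : (x : EuclideanSpace ℝ (Fin n)) + (a • v + b • w)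
            = a • ((x : EuclideanSpace ℝ (Fin n)) + v) + b • ((x : EuclideanSpace ℝ (Fin n)) + w) := by
          rw [smul_add, smul_add, show a • (x : EuclideanSpace ℝ (Fin n)) + a • v
              + (b • (x : EuclideanSpace ℝ (Fin n)) + b • w)
              = (a + b) • (x : EuclideanSpace ℝ (Fin n)) + (a • v + b • w) by
            rw [add_smul]; abel]
          rw [hab, one_smul]
        simpa only [Set.mem_setOf_eq, hx] using hLcv hv hw ha hb hab
      · intro x
        have : {v : EuclideanSpace ℝ (Fin n) | (x : EuclideanSpace ℝ (Fin n)) + v ∈ L}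
            = (fun w => w - (x : EuclideanSpace ℝ (Fin n))) '' L := by
          ext v
          constructor
          · intro hv; exact ⟨(x : EuclideanSpace ℝ (Fin n)) + v, hv, add_sub_cancel_left _ _⟩
          · rintro ⟨y, hy, rfl⟩
            show (x : EuclideanSpace ℝ (Fin n)) + (y - x) ∈ L
            rw [show (x : EuclideanSpace ℝ (Fin n)) + (y - x) = y by abel]
            exact hy
        rw [this]
        exact hLcp.image (continuous_id.sub continuous_const)
      · intro I hI
        obtain ⟨v, hv⟩ := h (convexHull ℝ (↑(I.image (Subtype.val)) : Set (EuclideanSpace ℝ (Fin n))))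
          ⟨I.image Subtype.val, by
            refine ⟨?_, ?_, rfl⟩
            · calc (I.image Subtype.val).card ≤ I.card := Finset.card_image_le
                _ ≤ _ := by simpa [finrank_euclideanSpace_fin] using hI
            · intro y hy
              simp only [Finset.coe_image, Set.mem_image] at hy
              obtain ⟨x, _, rfl⟩ := hy
              exact x.2⟩
        refine ⟨v, ?_⟩
        simp only [Set.mem_iInter]
        intro x hx
        refine hv ⟨x, subset_convexHull ℝ _ ?_, rfl⟩
        simp only [Finset.coe_image, Set.mem_image]
        exact ⟨x, hx, rfl⟩
    obtain ⟨v₀, hv₀⟩ := key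
    simp only [Set.mem_iInter, Set.mem_setOf_eq] at hv₀
    exact ⟨v₀, by rintro _ ⟨x, hx, rfl⟩; exact hv₀ ⟨x, hx⟩⟩
  · rintro ⟨v₀, hv₀⟩ Q ⟨s, hcard, hsK, rfl⟩
    exact ⟨v₀, fun y ⟨x, hx, hxy⟩ => hv₀ ⟨x, (convexHull_min hsK hKcv) hx, hxy⟩⟩
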